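/- For all positive integers ℓ and n, Σ_{k=1}^{n} σ(ℓk)/(ℓk) = n · Σ_{d=1}^{∞} gcd(d,ℓ)/d² + O(log(ℓn)), where the implied constant is absolute. -/

import Mathlib

open Finset

lemma aux_natdiv_err (n m : ℕ) (hm : 1 ≤ m) :
    |((n / m : ℕ) : ℝ) - (n : ℝ) / m| ≤ 1 := by
  have hm' : (0:ℝ) < m := by exact_mod_cast hm
  rw [abs_sub_comm, abs_le]
  have h1 : n < m * (n / m) + m := by
    have h := Nat.div_add_mod n m
    have h2 := Nat.mod_lt n (show 0 < m from hm)
    omega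
  have h1' : (n : ℝ) < m * ((n / m : ℕ) : ℝ) + m := by exact_mod_cast h1
  have h2 : ((n / m : ℕ) : ℝ) ≤ (n : ℝ) / m := Nat.cast_div_le
  constructor
  · linarith
  · rw [sub_le_iff_le_add, div_le_iff₀ hm']
    nlinarith

lemma aux_dvd_iff (d l k : ℕ) (hd : 0 < d) :
    d ∣ l * k ↔ (d / Nat.gcd d l) ∣ k := by
  have hg : 0 < Nat.gcd d l := Nat.gcd_pos_of_pos_left l hd
  have hdg : Nat.gcd d l ∣ d := Nat.gcd_dvd_left d l
  have hlg : Nat.gcd d l ∣ l := Nat.gcd_dvd_right d l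
  have hco : Nat.Coprime (d / Nat.gcd d l) (l / Nat.gcd d l) :=
    Nat.coprime_div_gcd_div_gcd hg
  have hd' : Nat.gcd d l * (d / Nat.gcd d l) = d := Nat.mul_div_cancel' hdg
  have hl' : Nat.gcd d l * (l / Nat.gcd d l) = l := Nat.mul_div_cancel' hlg
  constructor
  · intro h
    have h2 : Nat.gcd d l * (d / Nat.gcd d l) ∣ Nat.gcd d l * ((l / Nat.gcd d l) * k) := by
      rw [hd', ← mul_assoc, hl']; exact h
    have h3 : (d / Nat.gcd d l) ∣ (l / Nat.gcd d l) * k :=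
      (mul_dvd_mul_iff_left hg.ne').mp h2
    exact hco.dvd_of_dvd_mul_left h3
  · intro h
    calc d = Nat.gcd d l * (d / Nat.gcd d l) := hd'.symm
    _ ∣ l * k := mul_dvd_mul hlg h

lemma aux_sigma_div (m : ℕ) (hm : m ≠ 0) :
    (ArithmeticFunction.sigma 1 m : ℝ) / m = ∑ d ∈ m.divisors, (1 : ℝ) / d := by
  have hm0 : (m:ℝ) ≠ 0 := Nat.cast_ne_zero.mpr hm
  rw [ArithmeticFunction.sigma_one_apply, ← Nat.sum_div_divisors m (fun d => d)]
  rw [Nat.cast_sum, Finset.sum_div]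
  refine Finset.sum_congr rfl fun d hd => ?_
  have hdvd : d ∣ m := (Nat.mem_divisors.mp hd).1
  have hd0 : (d:ℝ) ≠ 0 := Nat.cast_ne_zero.mpr (Nat.pos_of_mem_divisors hd).ne'
  rw [Nat.cast_div hdvd hd0, div_right_comm, div_self hm0]

-- Step A: the finite rearrangement
lemma aux_rearrange (l n : ℕ) (hl : 1 ≤ l) (hn : 1 ≤ n) :
    ∑ k ∈ Finset.Icc 1 n, (ArithmeticFunction.sigma 1 (l * k) : ℝ) / (↑(l * k))
      = ∑ d ∈ Finset.Icc 1 (l * n),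
          ((n / (d / Nat.gcd d l) : ℕ) : ℝ) * (1 / d) := by
  have step1 : ∀ k ∈ Icc 1 n, (ArithmeticFunction.sigma 1 (l * k) : ℝ) / (↑(l * k))
      = ∑ d ∈ Icc 1 (l * n), if d ∣ l * k then (1:ℝ)/d else 0 := by
    intro k hk
    obtain ⟨hk1, hk2⟩ := mem_Icc.mp hk
    have hlk : l * k ≠ 0 := by positivity
    rw [aux_sigma_div _ hlk]
    have hdiv : (l * k).divisors = (Icc 1 (l * n)).filter (· ∣ l * k) := by
      ext d
      simp only [Nat.mem_divisors, mem_filter, mem_Icc]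
      constructor
      · rintro ⟨h1, -⟩
        refine ⟨⟨Nat.pos_of_dvd_of_pos h1 (Nat.pos_of_ne_zero hlk), ?_⟩, h1⟩
        exact (Nat.le_of_dvd (Nat.pos_of_ne_zero hlk) h1).trans
          (Nat.mul_le_mul_left l hk2)
      · rintro ⟨-, h1⟩
        exact ⟨h1, hlk⟩
    rw [hdiv, Finset.sum_filter]
  rw [Finset.sum_congr rfl step1, Finset.sum_comm]
  refine Finset.sum_congr rfl fun d hd => ?_
  obtain ⟨hd1, hd2⟩ := mem_Icc.mp hd
  have hdpos : 0 < d := hd1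
  rw [← Finset.sum_filter]
  have hfc : (Icc 1 n).filter (fun k => d ∣ l * k)
      = (Ioc 0 n).filter (fun k => (d / Nat.gcd d l) ∣ k) := by
    have h1 : Icc 1 n = Ioc 0 n := Finset.ext fun x => by
      simp only [mem_Icc, mem_Ioc]; omega
    rw [h1]
    exact Finset.filter_congr fun k _ => by
      simp only [aux_dvd_iff d l k hdpos]
  rw [hfc, Finset.sum_const, Nat.Ioc_filter_dvd_card_eq_div, nsmul_eq_mul]

lemma aux_inv_sq (x : ℝ) (hx : 1 ≤ x) : ((x+1)^2)⁻¹ ≤ x⁻¹ - (x+1)⁻¹ := by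
  have hx0 : (0:ℝ) < x := lt_of_lt_of_le one_pos hx
  have h1 : (0:ℝ) < x + 1 := by linarith
  have h2 : x⁻¹ - (x+1)⁻¹ = (x*(x+1))⁻¹ := by field_simp; ring
  rw [h2]
  apply inv_anti₀ (by positivity)
  nlinarith

theorem sum_sigma_div_mul : ∃ C : ℝ, 0 < C ∧ ∀ l n : ℕ, 1 ≤ l → 1 ≤ n →
    |∑ k ∈ Finset.Icc 1 n, (ArithmeticFunction.sigma 1 (l * k) : ℝ) / (l * k)
      - n * ∑' d : ℕ, (Nat.gcd (d + 1) l : ℝ) / ((d + 1 : ℕ) ^ 2)|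
      ≤ C * (1 + Real.log (l * n)) := by
  refine ⟨2, by norm_num, fun l n hl hn => ?_⟩
  set N := l * n with hNdef
  have hN1 : 1 ≤ N := Nat.one_le_iff_ne_zero.mpr (by positivity)
  have hNR : (1:ℝ) ≤ (N:ℝ) := by exact_mod_cast hN1
  have hNR0 : (0:ℝ) < (N:ℝ) := lt_of_lt_of_le one_pos hNR
  have hlog : 0 ≤ Real.log N := Real.log_nonneg hNR
  set F : ℕ → ℝ := fun d => (Nat.gcd (d + 1) l : ℝ) / ((d + 1 : ℕ) ^ 2) with hF
  -- summability
  have hFnonneg : ∀ d, 0 ≤ F d := fun d => by positivity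
  have hFle : ∀ d : ℕ, F d ≤ (l:ℝ) * (1 / ((d+1:ℕ):ℝ)^2) := by
    intro d
    rw [hF]
    simp only [mul_one_div]
    gcongr
    exact_mod_cast Nat.le_of_dvd hl (Nat.gcd_dvd_right (d+1) l)
  have hsummable0 : Summable (fun d : ℕ => (l:ℝ) * (1 / ((d+1:ℕ):ℝ)^2)) := by
    apply Summable.mul_left
    have h2 : Summable (fun d : ℕ => 1 / ((d:ℕ):ℝ)^2) :=
      Real.summable_one_div_nat_pow.mpr one_lt_two
    exact_mod_cast (summable_nat_add_iff 1).mpr h2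
  have hsummable : Summable F :=
    Summable.of_nonneg_of_le hFnonneg hFle hsummable0
  -- split the tsum
  have hsplit : ∑ i ∈ range N, F i + ∑' i, F (i + N) = ∑' i, F i :=
    Summable.sum_add_tsum_nat_add N hsummable
  -- the finite part of the tsum
  have hrange : ∑ i ∈ range N, F i
      = ∑ d ∈ Icc 1 N, (Nat.gcd d l : ℝ) / (d:ℝ)^2 := by
    refine Finset.sum_nbij' (fun i => i + 1) (fun d => d - 1) ?_ ?_ ?_ ?_ ?_
    · intro a ha; simp only [mem_range] at ha; simp only [mem_Icc]; omega
    · intro a ha; simp only [mem_Icc] at ha; simp only [mem_range]; omega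
    · intro a _; show a + 1 - 1 = a; omega
    · intro a ha; simp only [mem_Icc] at ha; show a - 1 + 1 = a; omega
    · intro a _; rfl
  -- the tail of the tsum
  have htail_nonneg : 0 ≤ ∑' i, F (i + N) := tsum_nonneg fun i => hFnonneg _
  have htail : ∑' i, F (i + N) ≤ (l:ℝ) / N := by
    apply Real.tsum_le_of_sum_range_le (fun i => hFnonneg _)
    intro M
    have hpt : ∀ i : ℕ, F (i + N) ≤
        (fun j : ℕ => (l:ℝ) * ((N:ℝ) + j)⁻¹) i
          - (fun j : ℕ => (l:ℝ) * ((N:ℝ) + j)⁻¹) (i + 1) := by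
      intro i
      have hx : (1:ℝ) ≤ (N:ℝ) + i := le_add_of_le_of_nonneg hNR (Nat.cast_nonneg i)
      have h1 := aux_inv_sq ((N:ℝ) + i) hx
      have hcast : ((i + N + 1:ℕ):ℝ) = ((N:ℝ) + i) + 1 := by push_cast; ring
      have hcast2 : ((N:ℝ) + ((i+1:ℕ):ℝ)) = ((N:ℝ) + i) + 1 := by push_cast; ring
      show F (i + N) ≤ (l:ℝ) * ((N:ℝ) + i)⁻¹ - (l:ℝ) * ((N:ℝ) + ((i+1:ℕ):ℝ))⁻¹
      calc F (i + N) ≤ (l:ℝ) * (1 / ((i + N + 1:ℕ):ℝ)^2) := hFle _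
        _ = (l:ℝ) * ((((N:ℝ) + i) + 1)^2)⁻¹ := by rw [hcast, one_div]
        _ ≤ (l:ℝ) * (((N:ℝ) + i)⁻¹ - (((N:ℝ) + i) + 1)⁻¹) :=
            mul_le_mul_of_nonneg_left h1 (Nat.cast_nonneg l)
        _ = (l:ℝ) * ((N:ℝ) + i)⁻¹ - (l:ℝ) * ((N:ℝ) + ((i+1:ℕ):ℝ))⁻¹ := by
            rw [hcast2, mul_sub]
    calc ∑ i ∈ range M, F (i + N)
        ≤ ∑ i ∈ range M, ((fun j : ℕ => (l:ℝ) * ((N:ℝ) + j)⁻¹) i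
            - (fun j : ℕ => (l:ℝ) * ((N:ℝ) + j)⁻¹) (i + 1)) :=
          Finset.sum_le_sum fun i _ => hpt i
      _ = (l:ℝ) * ((N:ℝ) + ((0:ℕ):ℝ))⁻¹ - (l:ℝ) * ((N:ℝ) + (M:ℝ))⁻¹ :=
          Finset.sum_range_sub' (fun j : ℕ => (l:ℝ) * ((N:ℝ) + j)⁻¹) M
      _ ≤ (l:ℝ) / N := by
          push_cast
          rw [add_zero, div_eq_mul_inv]
          have hinv : (0:ℝ) ≤ ((N:ℝ) + M)⁻¹ := by positivity
          have hl0 : (0:ℝ) ≤ (l:ℝ) := Nat.cast_nonneg l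
          nlinarith
  -- rewrite the main sum
  have hS : ∑ k ∈ Finset.Icc 1 n, (ArithmeticFunction.sigma 1 (l * k) : ℝ) / (↑l * ↑k)
      = ∑ d ∈ Finset.Icc 1 N, ((n / (d / Nat.gcd d l) : ℕ) : ℝ) * (1 / d) := by
    rw [← aux_rearrange l n hl hn]
    refine Finset.sum_congr rfl fun k _ => ?_
    push_cast; ring
  -- pointwise estimate
  have hperd : ∀ d ∈ Icc 1 N,
      |((n / (d / Nat.gcd d l) : ℕ) : ℝ) * (1 / (d:ℝ))
        - (n:ℝ) * ((Nat.gcd d l : ℝ) / (d:ℝ)^2)| ≤ 1 / (d:ℝ) := by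
    intro d hd
    obtain ⟨hd1, hd2⟩ := mem_Icc.mp hd
    have hg : 0 < Nat.gcd d l := Nat.gcd_pos_of_pos_left l hd1
    have hgm : Nat.gcd d l * (d / Nat.gcd d l) = d := Nat.mul_div_cancel' (Nat.gcd_dvd_left d l)
    have hm1 : 1 ≤ d / Nat.gcd d l := by
      rcases Nat.eq_zero_or_pos (d / Nat.gcd d l) with h | h
      · rw [h, mul_zero] at hgm; omega
      · exact h
    have hgmR : (Nat.gcd d l : ℝ) * ((d / Nat.gcd d l : ℕ) : ℝ) = (d:ℝ) := by
      exact_mod_cast hgm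
    have hdR : (0:ℝ) < (d:ℝ) := by exact_mod_cast hd1
    have hmR : (0:ℝ) < ((d / Nat.gcd d l : ℕ) : ℝ) := by exact_mod_cast hm1
    have hgR : (0:ℝ) < (Nat.gcd d l : ℝ) := by exact_mod_cast hg
    have hm0 : ((d / Nat.gcd d l : ℕ) : ℝ) ≠ 0 := hmR.ne'
    have hg0 : (Nat.gcd d l : ℝ) ≠ 0 := hgR.ne'
    have heq : (n:ℝ) * ((Nat.gcd d l : ℝ) / (d:ℝ)^2)
        = ((n:ℝ) / ((d / Nat.gcd d l : ℕ) : ℝ)) * (1 / (d:ℝ)) := by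
      rw [← hgmR]
      field_simp
    rw [heq, show ((n / (d / Nat.gcd d l) : ℕ) : ℝ) * (1 / (d:ℝ))
        - ((n:ℝ) / ((d / Nat.gcd d l : ℕ) : ℝ)) * (1 / (d:ℝ))
        = (((n / (d / Nat.gcd d l) : ℕ) : ℝ)
            - (n:ℝ) / ((d / Nat.gcd d l : ℕ) : ℝ)) * (1 / (d:ℝ)) from by ring,
      abs_mul, abs_of_nonneg (by positivity : (0:ℝ) ≤ 1 / (d:ℝ))]
    calc |((n / (d / Nat.gcd d l) : ℕ) : ℝ) - (n:ℝ) / ((d / Nat.gcd d l : ℕ) : ℝ)| * (1 / (d:ℝ))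
        ≤ 1 * (1 / (d:ℝ)) :=
          mul_le_mul_of_nonneg_right (aux_natdiv_err n (d / Nat.gcd d l) hm1) (by positivity)
      _ = 1 / (d:ℝ) := one_mul _
  -- harmonic bound
  have hH : ∑ d ∈ Icc 1 N, (1:ℝ) / d ≤ 1 + Real.log N := by
    have h1 : (harmonic N : ℝ) = ∑ d ∈ Icc 1 N, (1:ℝ) / d := by
      rw [harmonic_eq_sum_Icc]
      push_cast
      simp [one_div]
    rw [← h1]
    exact harmonic_le_one_add_log N
  -- assemble
  rw [hS, ← hsplit, hrange]
  have hnl : (n:ℝ) * ((l:ℝ) / N) = 1 := by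
    rw [hNdef]; push_cast; field_simp
  have hnT0 : 0 ≤ (n:ℝ) * ∑' i, F (i + N) := by positivity
  have hnT1 : (n:ℝ) * ∑' i, F (i + N) ≤ 1 := by
    rw [← hnl]
    exact mul_le_mul_of_nonneg_left htail (Nat.cast_nonneg n)
  rw [show ∑ d ∈ Icc 1 N, ((n / (d / Nat.gcd d l) : ℕ) : ℝ) * (1 / d)
      - (n:ℝ) * (∑ d ∈ Icc 1 N, (Nat.gcd d l : ℝ) / (d:ℝ)^2 + ∑' i, F (i + N))
      = (∑ d ∈ Icc 1 N, (((n / (d / Nat.gcd d l) : ℕ) : ℝ) * (1 / d)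
          - (n:ℝ) * ((Nat.gcd d l : ℝ) / (d:ℝ)^2)))
        - (n:ℝ) * ∑' i, F (i + N) from by
    rw [Finset.sum_sub_distrib, ← Finset.mul_sum]; ring]
  calc |(∑ d ∈ Icc 1 N, (((n / (d / Nat.gcd d l) : ℕ) : ℝ) * (1 / d)
          - (n:ℝ) * ((Nat.gcd d l : ℝ) / (d:ℝ)^2)))
        - (n:ℝ) * ∑' i, F (i + N)|
      ≤ |∑ d ∈ Icc 1 N, (((n / (d / Nat.gcd d l) : ℕ) : ℝ) * (1 / d)
          - (n:ℝ) * ((Nat.gcd d l : ℝ) / (d:ℝ)^2))|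
        + |(n:ℝ) * ∑' i, F (i + N)| := abs_sub _ _
    _ ≤ (∑ d ∈ Icc 1 N, (1:ℝ) / d) + 1 := by
        apply add_le_add
        · exact (Finset.abs_sum_le_sum_abs _ _).trans (Finset.sum_le_sum hperd)
        · rw [abs_of_nonneg hnT0]; exact hnT1
    _ ≤ (1 + Real.log N) + 1 := by linarith
    _ ≤ 2 * (1 + Real.log ((l:ℝ) * n)) := by
        have hc : ((l:ℝ) * n) = (N:ℝ) := by rw [hNdef]; push_cast; ring
        rw [hc]; linarith
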